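/- A k-spinner with k ≥ 4, with all but three consecutive locations replaced by dead ends, simulates a deterministic fork: a 3-location 2-state gadget allowing, in one state, a traversal from the center location to the right location and from the left location to the center location (each flipping the state), with the directions reversed in the other state. -/

import Mathlib

/-- A `k`-spinner: locations `ZMod k` arranged in a cycle, states `Bool`.  In state
`false` the robot moves from any location to its clockwise neighbour (`+1`), in state
`true` to its counterclockwise neighbour (`-1`); every traversal flips the state. -/
def SpinnerStep (k : ℕ) : (Bool × ZMod k) → (Bool × ZMod k) → Prop := fun c c' =>
  c'.1 = !c.1 ∧ c'.2 = (if c.1 then c.2 - 1 else c.2 + 1)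

/-- The three consecutive locations `{0, 1, 2}` that are kept as external locations;
all other locations lead to dead ends. -/
def SpinnerExt (k : ℕ) : Set (ZMod k) := {0, 1, 2}

/-- A traversal of the gadget: a walk in the spinner from one external location to
another whose intermediate locations are all dead ends (not external). -/
def SpinnerTraversal (k : ℕ) (l : List (Bool × ZMod k)) (c₀ c₁ : Bool × ZMod k) :
    Prop :=
  l.Chain' (SpinnerStep k) ∧ l.head? = some c₀ ∧ l.getLast? = some c₁ ∧
    ∀ c ∈ (l.drop 1).dropLast, c.2 ∉ SpinnerExt k

/-- The deterministic fork (center location `1`, left `0`, right `2`): in state `false`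
it allows center→right (`1→2`) and left→center (`0→1`), each flipping the state; in
state `true` the reversed directions. -/
def ForkRel {k : ℕ} (s : Bool) (x : ZMod k) (s' : Bool) (y : ZMod k) : Prop :=
  s' = !s ∧
    ((s = false ∧ ((x = 1 ∧ y = 2) ∨ (x = 0 ∧ y = 1))) ∨
     (s = true ∧ ((x = 2 ∧ y = 1) ∨ (x = 1 ∧ y = 0))))

lemma zmod_cast_ne (k a b : ℕ) (hk : 0 < k) (ha : a < k) (hb : b < k) (h : a ≠ b) :
    (a : ZMod k) ≠ (b : ZMod k) := by
  haveI : NeZero k := ⟨hk.ne'⟩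
  intro h'
  exact h (by simpa [ZMod.val_cast_of_lt ha, ZMod.val_cast_of_lt hb] using congrArg ZMod.val h')

lemma traversal_char (k : ℕ) (s s' : Bool) (x y : ZMod k) (hx : x ∈ SpinnerExt k)
    (hxy : x ≠ y) (l : List (Bool × ZMod k))
    (h : SpinnerTraversal k l (s, x) (s', y)) :
    s' = !s ∧ y = (if s then x - 1 else x + 1) := by
  obtain ⟨hchain, hhead, hlast, hmid⟩ := h
  match l with
  | [] => simp at hhead
  | [a] =>
    simp at hhead hlast
    rw [hhead] at hlast
    exact absurd (congrArg Prod.snd hlast) hxy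
  | a :: b :: rest =>
    simp at hhead
    subst hhead
    rw [List.Chain', List.isChain_cons_cons] at hchain
    obtain ⟨⟨hb1, hb2⟩, hchain⟩ := hchain
    match rest with
    | [] =>
      obtain ⟨b1, b2⟩ := b
      simp at hlast hb1 hb2
      exact ⟨hlast.1 ▸ hb1, hlast.2 ▸ hb2⟩
    | c :: t =>
      rw [List.isChain_cons_cons] at hchain
      obtain ⟨⟨hc1, hc2⟩, _⟩ := hchain
      have hcx : c.2 = x := by
        rw [hc2, hb1, hb2]
        cases s <;> simp
      match t with
      | [] =>
        simp at hlast
        rw [hlast] at hcx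
        exact absurd hcx.symm hxy
      | d :: t' =>
        have hcmem : c ∈ (List.drop 1 ((s, x) :: b :: c :: d :: t')).dropLast :=
          List.mem_cons_of_mem _ List.mem_cons_self
        exact absurd (hcx ▸ hx) (hmid c hcmem)

/-- for `k ≥ 4`, a `k`-spinner with all but the three consecutive
locations `0,1,2` replaced by dead ends simulates a deterministic fork: a traversal
from external `x` to a different external `y` (ignoring excursions into dead ends,
i.e. with all intermediate locations non-external) is possible exactly according to
the deterministic fork's transition relation. -/
theorem spinner_simulates_deterministic_fork (k : ℕ) (hk : 4 ≤ k)
    (s s' : Bool) (x y : ZMod k) (hx : x ∈ SpinnerExt k) (hy : y ∈ SpinnerExt k)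
    (hxy : x ≠ y) :
    (∃ l, SpinnerTraversal k l (s, x) (s', y)) ↔ ForkRel s x s' y := by
  have h01 : (0 : ZMod k) ≠ 1 := by
    have := zmod_cast_ne k 0 1 (by omega) (by omega) (by omega) (by omega); simpa using this
  have h02 : (0 : ZMod k) ≠ 2 := by
    have := zmod_cast_ne k 0 2 (by omega) (by omega) (by omega) (by omega); simpa using this
  have h30 : (3 : ZMod k) ≠ 0 := by
    have := zmod_cast_ne k 3 0 (by omega) (by omega) (by omega) (by omega); simpa using this
  have h31 : (3 : ZMod k) ≠ 1 := by
    have := zmod_cast_ne k 3 1 (by omega) (by omega) (by omega) (by omega); simpa using this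
  have h32 : (3 : ZMod k) ≠ 2 := by
    have := zmod_cast_ne k 3 2 (by omega) (by omega) (by omega) (by omega); simpa using this
  simp only [SpinnerExt, Set.mem_insert_iff, Set.mem_singleton_iff] at hx hy
  constructor
  · rintro ⟨l, hl⟩
    obtain ⟨hs', hy'⟩ := traversal_char k s s' x y
      (by simpa [SpinnerExt, Set.mem_insert_iff, Set.mem_singleton_iff] using hx) hxy l hl
    refine ⟨hs', ?_⟩
    cases s <;> simp only [if_true, if_false, Bool.false_eq_true, reduceIte] at hy' <;>
      subst hy' <;> rcases hx with rfl | rfl | rfl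
    · exact Or.inl ⟨rfl, Or.inr ⟨rfl, by norm_num⟩⟩
    · exact Or.inl ⟨rfl, Or.inl ⟨rfl, by norm_num⟩⟩
    · -- x = 2, s = false : y = 3, impossible
      exfalso
      rcases hy with hy | hy | hy
      · exact h30 (by linear_combination hy)
      · exact h31 (by linear_combination hy)
      · exact h32 (by linear_combination hy)
    · -- x = 0, s = true : y = -1, impossible
      exfalso
      rcases hy with hy | hy | hy
      · exact h01 (by linear_combination hy)
      · exact h02 (by linear_combination hy)
      · exact h30 (by linear_combination -hy)
    · exact Or.inr ⟨rfl, Or.inr ⟨rfl, by norm_num⟩⟩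
    · exact Or.inr ⟨rfl, Or.inl ⟨rfl, by norm_num⟩⟩
  · rintro ⟨hs', hcase⟩
    refine ⟨[(s, x), (s', y)], ?_, by simp, by simp, by simp⟩
    rw [List.Chain', List.isChain_cons_cons]
    refine ⟨⟨hs', ?_⟩, List.isChain_singleton _⟩
    rcases hcase with ⟨hs, ⟨hx', hy'⟩ | ⟨hx', hy'⟩⟩ | ⟨hs, ⟨hx', hy'⟩ | ⟨hx', hy'⟩⟩ <;>
      subst_vars <;> norm_num
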